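/- Let f : (0, ∞) → ℝ be measurable, and suppose there exists x₀ > 0 such that f has constant sign on (x₀, ∞) (i.e. f ≥ 0 there or f ≤ 0 there). Suppose the abscissa of convergence σ_c of the Laplace transform L(f)(s) = ∫₀^∞ f(x) e^{-sx} dx is finite. Then L(f) has a singularity at s = σ_c; that is, L(f) cannot be continued to a function holomorphic in a neighbourhood of σ_c. -/

import Mathlib

open MeasureTheory Set Filter
open scoped Topology NNReal ENNReal

/-- On a bounded interval, multiplying by `exp (-σ x)` preserves integrability. -/
lemma landau_int_mul_exp {f : ℝ → ℝ} (hf : Measurable f) {T : ℝ} (σ : ℝ)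
    (h : IntegrableOn f (Ioc 0 T)) :
    IntegrableOn (fun x => f x * Real.exp (-σ * x)) (Ioc 0 T) := by
  refine Integrable.mono' (h.norm.const_mul (Real.exp (|σ| * T)))
    ((hf.mul ((Real.measurable_exp.comp (measurable_id.const_mul (-σ))))).aestronglyMeasurable) ?_
  rw [ae_restrict_iff' measurableSet_Ioc]
  filter_upwards with x hx
  have h1 : -σ * x ≤ |σ| * T := by
    calc -σ * x ≤ |σ| * x := by
          apply mul_le_mul_of_nonneg_right (neg_le_abs σ) hx.1.le
    _ ≤ |σ| * T := by apply mul_le_mul_of_nonneg_left hx.2 (abs_nonneg σ)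
  rw [norm_mul, Real.norm_eq_abs (Real.exp _), Real.abs_exp]
  calc ‖f x‖ * Real.exp (-σ * x) ≤ ‖f x‖ * Real.exp (|σ| * T) := by
        apply mul_le_mul_of_nonneg_left (Real.exp_le_exp.2 h1) (norm_nonneg _)
  _ = Real.exp (|σ| * T) * ‖f x‖ := by ring

/-- Converse direction. -/
lemma landau_int_of_mul_exp {f : ℝ → ℝ} (hf : Measurable f) {T σ : ℝ}
    (h : IntegrableOn (fun x => f x * Real.exp (-σ * x)) (Ioc 0 T)) :
    IntegrableOn f (Ioc 0 T) := by
  refine Integrable.mono' (h.norm.const_mul (Real.exp (|σ| * T)))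
    hf.aestronglyMeasurable ?_
  rw [ae_restrict_iff' measurableSet_Ioc]
  filter_upwards with x hx
  have h1 : σ * x ≤ |σ| * T := by
    calc σ * x ≤ |σ| * x := by
          apply mul_le_mul_of_nonneg_right (le_abs_self σ) hx.1.le
    _ ≤ |σ| * T := by apply mul_le_mul_of_nonneg_left hx.2 (abs_nonneg σ)
  have : ‖f x‖ = ‖f x * Real.exp (-σ * x)‖ * Real.exp (σ * x) := by
    rw [norm_mul, Real.norm_eq_abs (Real.exp _), Real.abs_exp, mul_assoc,
      ← Real.exp_add]
    simp
  rw [this]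
  calc ‖f x * Real.exp (-σ * x)‖ * Real.exp (σ * x)
      ≤ ‖f x * Real.exp (-σ * x)‖ * Real.exp (|σ| * T) := by
        apply mul_le_mul_of_nonneg_left (Real.exp_le_exp.2 h1) (norm_nonneg _)
  _ = Real.exp (|σ| * T) * ‖f x * Real.exp (-σ * x)‖ := by ring

/-- `x ^ n ≤ (n! / δ^n) * exp (δ x)` for `x ≥ 0`, `δ > 0`. -/
lemma landau_pow_le_exp {δ : ℝ} (hδ : 0 < δ) {x : ℝ} (hx : 0 ≤ x) (n : ℕ) :
    x ^ n ≤ (n.factorial / δ ^ n) * Real.exp (δ * x) := by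
  have h := Real.pow_div_factorial_le_exp (x := δ * x) (mul_nonneg hδ.le hx) n
  have hδn : (0:ℝ) < δ ^ n := pow_pos hδ n
  rw [mul_pow] at h
  have h2 : δ ^ n * x ^ n / (n.factorial : ℝ) ≤ Real.exp (δ * x) := h
  rw [div_le_iff₀ (by positivity)] at h2
  rw [div_mul_eq_mul_div, le_div_iff₀ hδn]
  calc x ^ n * δ ^ n = δ ^ n * x ^ n := by ring
  _ ≤ Real.exp (δ * x) * n.factorial := h2
  _ = n.factorial * Real.exp (δ * x) := by ring

section Aux

variable {f : ℝ → ℝ} {σc : ℝ}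

/-- Integrability of `|f| x^n e^{-t x}` from integrability of all `|f| e^{-t' x}`. -/
lemma landau_habs_pow (hf : Measurable f)
    (habs : ∀ t : ℝ, σc < t → IntegrableOn (fun x => |f x| * Real.exp (-t * x)) (Ioi 0))
    {t : ℝ} (ht : σc < t) (n : ℕ) :
    IntegrableOn (fun x => |f x| * x ^ n * Real.exp (-t * x)) (Ioi 0) := by
  set t' : ℝ := (σc + t) / 2 with ht'def
  have ht' : σc < t' := by simp only [ht'def]; linarith
  have hδ : (0:ℝ) < t - t' := by simp only [ht'def]; linarith
  refine Integrable.mono' (((habs t' ht').const_mul ((n.factorial : ℝ) / (t - t') ^ n)))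
    ((hf.abs.mul (measurable_id.pow_const _)).mul
      (Real.measurable_exp.comp (measurable_id.const_mul (-t)))).aestronglyMeasurable ?_
  rw [ae_restrict_iff' measurableSet_Ioi]
  filter_upwards with x hx
  have hx0 : (0:ℝ) ≤ x := (le_of_lt hx)
  have hpow := landau_pow_le_exp hδ hx0 n
  rw [Real.norm_eq_abs, abs_mul, abs_mul, abs_abs, abs_of_nonneg (pow_nonneg hx0 n),
    Real.abs_exp]
  calc |f x| * x ^ n * Real.exp (-t * x)
      ≤ |f x| * ((n.factorial / (t - t') ^ n) * Real.exp ((t - t') * x)) * Real.exp (-t * x) := by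
        apply mul_le_mul_of_nonneg_right _ (Real.exp_nonneg _)
        exact mul_le_mul_of_nonneg_left hpow (abs_nonneg _)
  _ = (n.factorial / (t - t') ^ n) * (|f x| * (Real.exp ((t - t') * x) * Real.exp (-t * x))) := by
        ring
  _ = (n.factorial / (t - t') ^ n) * (|f x| * Real.exp (-t' * x)) := by
        rw [← Real.exp_add]; ring_nf

/-- Key summability: `∑ (∫ |f| x^n e^{-tx}) * r^n / n! < ∞` when `σc < t - r`. -/
lemma landau_summable_aux (hf : Measurable f)
    (habs : ∀ t : ℝ, σc < t → IntegrableOn (fun x => |f x| * Real.exp (-t * x)) (Ioi 0))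
    {t r : ℝ} (ht : σc < t) (hr : 0 ≤ r) (hrt : σc < t - r) :
    Summable (fun n : ℕ =>
      (∫ x in Ioi 0, |f x| * x ^ n * Real.exp (-t * x)) * (r ^ n / n.factorial)) := by
  set A : ℕ → ℝ := fun n =>
    (∫ x in Ioi 0, |f x| * x ^ n * Real.exp (-t * x)) * (r ^ n / n.factorial) with hA
  have hinner : ∀ n : ℕ, IntegrableOn
      (fun x => |f x| * x ^ n * Real.exp (-t * x) * (r ^ n / n.factorial)) (Ioi 0) :=
    fun n => (landau_habs_pow hf habs ht n).mul_const _
  have hinner_nn : ∀ n : ℕ, (0 : ℝ → ℝ) ≤ᵐ[volume.restrict (Ioi 0)]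
      (fun x => |f x| * x ^ n * Real.exp (-t * x) * (r ^ n / n.factorial)) := by
    intro n
    refine (ae_restrict_mem measurableSet_Ioi).mono (fun x hx => ?_)
    have hx0 : (0:ℝ) ≤ x := le_of_lt (mem_Ioi.mp hx)
    simp only [Pi.zero_apply]
    positivity
  have hAeq : ∀ n : ℕ, ENNReal.ofReal (A n) = ∫⁻ x in Ioi 0,
      ENNReal.ofReal (|f x| * x ^ n * Real.exp (-t * x) * (r ^ n / n.factorial)) := by
    intro n
    simp only [hA]
    rw [← integral_mul_const]
    exact ofReal_integral_eq_lintegral_ofReal (hinner n) (hinner_nn n)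
  have hmeas : ∀ n : ℕ, AEMeasurable
      (fun x => ENNReal.ofReal (|f x| * x ^ n * Real.exp (-t * x) * (r ^ n / n.factorial)))
      (volume.restrict (Ioi 0)) := by
    intro n
    apply Measurable.aemeasurable
    apply ENNReal.measurable_ofReal.comp
    exact ((hf.abs.mul (measurable_id.pow_const _)).mul
      (Real.measurable_exp.comp (measurable_id.const_mul (-t)))).mul_const _
  have htsum : (∑' n : ℕ, ENNReal.ofReal (A n)) ≠ ∞ := by
    have h1 : (∑' n : ℕ, ENNReal.ofReal (A n)) = ∫⁻ x in Ioi 0,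
        ∑' n : ℕ, ENNReal.ofReal (|f x| * x ^ n * Real.exp (-t * x) * (r ^ n / n.factorial)) := by
      rw [tsum_congr hAeq]
      exact (lintegral_tsum hmeas).symm
    have h2 : ∫⁻ x in Ioi 0,
        (∑' n : ℕ, ENNReal.ofReal (|f x| * x ^ n * Real.exp (-t * x) * (r ^ n / n.factorial)))
        = ∫⁻ x in Ioi 0, ENNReal.ofReal (|f x| * Real.exp (-(t - r) * x)) := by
      apply setLIntegral_congr_fun measurableSet_Ioi
      intro x hx; beta_reduce
      have hx0 : (0:ℝ) ≤ x := le_of_lt hx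
      have hsumm : Summable (fun n : ℕ => |f x| * Real.exp (-t * x) * ((r * x) ^ n / n.factorial)) :=
        (Real.summable_pow_div_factorial (r * x)).mul_left _
      rw [← ENNReal.ofReal_tsum_of_nonneg]
      · congr 1
        have : (fun n : ℕ => |f x| * x ^ n * Real.exp (-t * x) * (r ^ n / n.factorial))
            = fun n : ℕ => |f x| * Real.exp (-t * x) * ((r * x) ^ n / n.factorial) := by
          funext n; rw [mul_pow]; ring
        rw [this, tsum_mul_left]
        have hexp : (∑' n : ℕ, (r * x) ^ n / n.factorial) = Real.exp (r * x) := by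
          rw [Real.exp_eq_exp_ℝ, NormedSpace.exp_eq_tsum_div]
        rw [hexp, mul_assoc, ← Real.exp_add]
        congr 2
        ring
      · intro n
        positivity
      · have : (fun n : ℕ => |f x| * x ^ n * Real.exp (-t * x) * (r ^ n / n.factorial))
            = fun n : ℕ => |f x| * Real.exp (-t * x) * ((r * x) ^ n / n.factorial) := by
          funext n; rw [mul_pow]; ring
        rw [this]; exact hsumm
    rw [h1, h2]
    exact (Integrable.lintegral_lt_top (habs (t - r) hrt)).ne
  have hAnn : ∀ n : ℕ, 0 ≤ A n := by
    intro n
    simp only [hA]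
    rw [← integral_mul_const]
    exact integral_nonneg_of_ae (hinner_nn n)
  have := ENNReal.summable_toReal htsum
  refine this.congr (fun n => ?_)
  rw [ENNReal.toReal_ofReal (hAnn n)]

end Aux

noncomputable def landauF (f : ℝ → ℝ) : ℂ → ℂ :=
  fun s => ∫ x in Ioi (0:ℝ), (f x : ℂ) * Complex.exp (-s * x)

noncomputable def landauP (f : ℝ → ℝ) (b : ℂ) : FormalMultilinearSeries ℂ ℂ ℂ :=
  fun n => ContinuousMultilinearMap.mkPiRing ℂ (Fin n)
    (∫ x in Ioi (0:ℝ), (f x : ℂ) * Complex.exp (-b * x) * (((-1 : ℂ) ^ n / n.factorial) * x ^ n))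

section Series

variable {f : ℝ → ℝ} {σc : ℝ}

lemma landau_norm_exp (s : ℂ) (x : ℝ) : ‖Complex.exp (-s * x)‖ = Real.exp (-s.re * x) := by
  rw [Complex.norm_exp]
  congr 1
  simp [Complex.mul_re]

lemma landau_intC (hf : Measurable f)
    (habs : ∀ t : ℝ, σc < t → IntegrableOn (fun x => |f x| * Real.exp (-t * x)) (Ioi 0))
    {s : ℂ} (hs : σc < s.re) (n : ℕ) (c : ℂ) :
    IntegrableOn (fun x : ℝ => (f x : ℂ) * Complex.exp (-s * x) * (c * x ^ n)) (Ioi 0) := by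
  refine Integrable.mono' (((landau_habs_pow hf habs hs n).mul_const ‖c‖))
    ?_ ?_
  · apply Measurable.aestronglyMeasurable
    apply Measurable.mul
    · exact (Complex.measurable_ofReal.comp hf).mul
        (Complex.measurable_exp.comp (measurable_const.mul
          (Complex.measurable_ofReal.comp measurable_id)))
    · exact measurable_const.mul
        ((Complex.measurable_ofReal.comp measurable_id).pow_const n)
  · refine (ae_restrict_mem measurableSet_Ioi).mono (fun x hx => ?_)
    have hx0 : (0:ℝ) ≤ x := le_of_lt (mem_Ioi.mp hx)
    rw [norm_mul, norm_mul, landau_norm_exp, Complex.norm_real, norm_mul, norm_pow,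
      Complex.norm_real, Real.norm_eq_abs, Real.norm_eq_abs, abs_of_nonneg hx0]
    apply le_of_eq
    ring

lemma landau_integral_norm_le (hf : Measurable f)
    (habs : ∀ t : ℝ, σc < t → IntegrableOn (fun x => |f x| * Real.exp (-t * x)) (Ioi 0))
    {s : ℂ} (hs : σc < s.re) (n : ℕ) (c : ℂ) :
    (∫ x in Ioi (0:ℝ), ‖(f x : ℂ) * Complex.exp (-s * x) * (c * x ^ n)‖)
      ≤ (∫ x in Ioi (0:ℝ), |f x| * x ^ n * Real.exp (-s.re * x)) * ‖c‖ := by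
  rw [← integral_mul_const]
  refine setIntegral_mono_on ((landau_intC hf habs hs n c).norm) 
    ((landau_habs_pow hf habs hs n).mul_const ‖c‖) measurableSet_Ioi (fun x hx => ?_)
  have hx0 : (0:ℝ) ≤ x := le_of_lt (mem_Ioi.mp hx)
  rw [norm_mul, norm_mul, landau_norm_exp, Complex.norm_real, norm_mul, norm_pow,
    Complex.norm_real, Real.norm_eq_abs, Real.norm_eq_abs, abs_of_nonneg hx0]
  apply le_of_eq
  ring

lemma landau_norm_integral_le (hf : Measurable f)
    (habs : ∀ t : ℝ, σc < t → IntegrableOn (fun x => |f x| * Real.exp (-t * x)) (Ioi 0))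
    {s : ℂ} (hs : σc < s.re) (n : ℕ) (c : ℂ) :
    ‖∫ x in Ioi (0:ℝ), (f x : ℂ) * Complex.exp (-s * x) * (c * x ^ n)‖
      ≤ (∫ x in Ioi (0:ℝ), |f x| * x ^ n * Real.exp (-s.re * x)) * ‖c‖ :=
  (norm_integral_le_integral_norm _).trans (landau_integral_norm_le hf habs hs n c)

lemma landau_norm_pow_fact (n : ℕ) : ‖((-1 : ℂ) ^ n / n.factorial)‖ = 1 / n.factorial := by
  rw [norm_div, norm_pow, norm_neg, norm_one, one_pow]
  congr 1
  exact Complex.norm_natCast _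

end Series

section PS

variable {f : ℝ → ℝ} {σc : ℝ}

lemma landau_hasFPowerSeries (hf : Measurable f)
    (habs : ∀ t : ℝ, σc < t → IntegrableOn (fun x => |f x| * Real.exp (-t * x)) (Ioi 0))
    {b : ℂ} (hb : σc < b.re) :
    HasFPowerSeriesOnBall (landauF f) (landauP f b) b (ENNReal.ofReal ((b.re - σc) / 2)) := by
  have hhalf : (0:ℝ) < (b.re - σc) / 2 := by linarith
  constructor
  · -- r_le
    have hcoe : ENNReal.ofReal ((b.re - σc) / 2)
        = (((b.re - σc) / 2).toNNReal : ℝ≥0∞) := rfl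
    rw [hcoe]
    apply FormalMultilinearSeries.le_radius_of_summable
    have hsum := landau_summable_aux hf habs hb hhalf.le (by linarith : σc < b.re - (b.re - σc) / 2)
    refine Summable.of_nonneg_of_le (fun n => ?_) (fun n => ?_) hsum
    · positivity
    · have h1 : ‖landauP f b n‖ = ‖∫ x in Ioi (0:ℝ),
          (f x : ℂ) * Complex.exp (-b * x) * (((-1 : ℂ) ^ n / n.factorial) * x ^ n)‖ := by
        simp only [landauP]
        exact ContinuousMultilinearMap.norm_mkPiRing _
      rw [h1]
      have h2 := landau_norm_integral_le hf habs hb n ((-1 : ℂ) ^ n / n.factorial)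
      rw [landau_norm_pow_fact] at h2
      have h3 : ((((b.re - σc) / 2).toNNReal : ℝ≥0) : ℝ) = (b.re - σc) / 2 :=
        Real.coe_toNNReal _ hhalf.le
      calc ‖∫ x in Ioi (0:ℝ), (f x : ℂ) * Complex.exp (-b * x)
              * (((-1 : ℂ) ^ n / n.factorial) * x ^ n)‖ * (((b.re - σc) / 2).toNNReal : ℝ) ^ n
          ≤ ((∫ x in Ioi (0:ℝ), |f x| * x ^ n * Real.exp (-b.re * x)) * (1 / n.factorial))
              * ((b.re - σc) / 2) ^ n := by
            rw [h3]
            apply mul_le_mul_of_nonneg_right h2 (pow_nonneg hhalf.le n)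
      _ = (∫ x in Ioi (0:ℝ), |f x| * x ^ n * Real.exp (-b.re * x))
              * (((b.re - σc) / 2) ^ n / n.factorial) := by ring
  · exact ENNReal.ofReal_pos.mpr hhalf
  · intro y hy
    have hy' : ‖y‖ < (b.re - σc) / 2 := by
      have h2 : edist y 0 < ENNReal.ofReal ((b.re - σc) / 2) := EMetric.mem_ball.mp hy
      rw [edist_zero_right, ← ofReal_norm] at h2
      exact (ENNReal.ofReal_lt_ofReal_iff_of_nonneg (norm_nonneg y)).mp h2
    -- the summands
    set Fn : ℕ → ℝ → ℂ := fun n x =>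
      (f x : ℂ) * Complex.exp (-b * x) * (((-y) ^ n / n.factorial) * x ^ n) with hFn
    have hint : ∀ n, Integrable (Fn n) (volume.restrict (Ioi 0)) := fun n =>
      landau_intC hf habs hb n _
    have hsumnorm : Summable fun n => ∫ x in Ioi (0:ℝ), ‖Fn n x‖ := by
      have hsum := landau_summable_aux hf habs hb (norm_nonneg y)
        (by linarith : σc < b.re - ‖y‖)
      refine Summable.of_nonneg_of_le (fun n => ?_) (fun n => ?_) hsum
      · exact integral_nonneg (fun x => norm_nonneg _)
      · have h2 := landau_integral_norm_le hf habs hb n ((-y) ^ n / (n.factorial : ℂ))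
        have h3 : ‖((-y) ^ n / (n.factorial : ℂ))‖ ≤ ‖y‖ ^ n / n.factorial := by
          rw [norm_div, norm_pow, norm_neg, Complex.norm_natCast]
        calc (∫ x in Ioi (0:ℝ), ‖Fn n x‖)
            ≤ (∫ x in Ioi (0:ℝ), |f x| * x ^ n * Real.exp (-b.re * x))
                * ‖((-y) ^ n / (n.factorial : ℂ))‖ := h2
        _ ≤ (∫ x in Ioi (0:ℝ), |f x| * x ^ n * Real.exp (-b.re * x))
                * (‖y‖ ^ n / n.factorial) := by
              apply mul_le_mul_of_nonneg_left h3
              apply integral_nonneg_of_ae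
              refine (ae_restrict_mem measurableSet_Ioi).mono (fun x hx => ?_)
              have hx0 : (0:ℝ) ≤ x := le_of_lt (mem_Ioi.mp hx)
              positivity
    have hHasSum := hasSum_integral_of_summable_integral_norm hint hsumnorm
    -- identify the pointwise sum
    have hptwise : (fun x : ℝ => ∑' n, Fn n x)
        = fun x : ℝ => (f x : ℂ) * Complex.exp (-(b + y) * x) := by
      funext x
      have hrw : (fun n : ℕ => Fn n x)
          = fun n : ℕ => (f x : ℂ) * Complex.exp (-b * x) * ((-y * x) ^ n / n.factorial) := by
        funext n
        simp only [hFn, mul_pow]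
        ring
      rw [hrw, tsum_mul_left]
      have hexp : (∑' n : ℕ, (-y * (x:ℂ)) ^ n / n.factorial) = Complex.exp (-y * x) := by
        rw [Complex.exp_eq_exp_ℂ, NormedSpace.exp_eq_tsum_div]
      rw [hexp, mul_assoc, ← Complex.exp_add]
      congr 2
      ring
    rw [hptwise] at hHasSum
    have hterm : ∀ n : ℕ, (landauP f b n fun _ => y) = ∫ x in Ioi (0:ℝ), Fn n x := by
      intro n
      simp only [landauP, ContinuousMultilinearMap.mkPiRing_apply, Finset.prod_const,
        Finset.card_univ, Fintype.card_fin, smul_eq_mul]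
      rw [← integral_const_mul]
      congr 1
      funext x
      have hnp : (-y) ^ n = (-1 : ℂ) ^ n * y ^ n := by rw [neg_pow]
      simp only [hFn, hnp]
      ring
    have hgoal : (fun n : ℕ => landauP f b n fun _ => y) = fun n => ∫ x in Ioi (0:ℝ), Fn n x :=
      funext hterm
    rw [hgoal]
    simpa only [landauF] using hHasSum

end PS

lemma landau_main (f : ℝ → ℝ) (hmeas : Measurable f)
    (x₀ : ℝ) (hx₀ : 0 < x₀) (hpos : ∀ x : ℝ, x₀ < x → 0 ≤ f x)
    (σc : ℝ)
    (hconv : ∀ σ : ℝ, σc < σ → ∃ I : ℝ,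
      Tendsto (fun T : ℝ => ∫ x in (0:ℝ)..T, f x * Real.exp (-σ * x)) atTop (𝓝 I))
    (hdiv : ∀ σ : ℝ, σ < σc → ¬ ∃ I : ℝ,
      Tendsto (fun T : ℝ => ∫ x in (0:ℝ)..T, f x * Real.exp (-σ * x)) atTop (𝓝 I)) :
    ¬ ∃ (g : ℂ → ℂ) (U : Set ℂ), IsOpen U ∧ (σc : ℂ) ∈ U ∧
      (∀ z ∈ U, AnalyticAt ℂ g z) ∧
      ∀ s : ℂ, s ∈ U → σc < s.re →
        Tendsto (fun T : ℝ => ∫ x in (0:ℝ)..T, (f x : ℂ) * Complex.exp (-s * x))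
          atTop (𝓝 (g s)) := by
  rintro ⟨g, U, hUopen, hUmem, hganal, hglim⟩
  by_cases hP : ∀ T : ℝ, IntegrableOn f (Ioc 0 T)
  swap
  · -- degenerate case: f not integrable near 0, all interval integrals are junk 0
    push_neg at hP
    obtain ⟨T₀, hT₀⟩ := hP
    refine hdiv (σc - 1) (by linarith) ⟨0, ?_⟩
    have hT₀pos : 0 < T₀ := by
      by_contra hc
      push_neg at hc
      refine hT₀ ?_
      rw [Set.Ioc_eq_empty (not_lt.mpr hc)]
      exact integrableOn_empty
    refine Tendsto.congr' ?_ tendsto_const_nhds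
    filter_upwards [eventually_ge_atTop T₀] with T hT
    refine (intervalIntegral.integral_undef ?_).symm
    intro hint
    rw [intervalIntegrable_iff_integrableOn_Ioc_of_le (hT₀pos.le.trans hT)] at hint
    exact hT₀ (landau_int_of_mul_exp hmeas
      (hint.mono_set (Set.Ioc_subset_Ioc_right hT)))
  -- main case
  · -- tail integrability at every σ' > σc
    have htail : ∀ σ' : ℝ, σc < σ' →
        IntegrableOn (fun x => f x * Real.exp (-σ' * x)) (Ioi x₀) := by
      intro σ' hσ'
      obtain ⟨I, hI⟩ := hconv σ' hσ'
      set W : ℝ → ℝ := fun x => f x * Real.exp (-σ' * x) with hW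
      have hW_Ioc : ∀ T : ℝ, IntegrableOn W (Ioc 0 T) := fun T =>
        landau_int_mul_exp hmeas σ' (hP T)
      have hW_IocX : ∀ T : ℝ, IntegrableOn W (Ioc x₀ T) := by
        intro T
        exact (hW_Ioc T).mono_set (Set.Ioc_subset_Ioc_left hx₀.le)
      refine integrableOn_Ioi_of_intervalIntegral_norm_tendsto
        (I - ∫ x in (0:ℝ)..x₀, W x) x₀ hW_IocX tendsto_id ?_
      have hII : ∀ T : ℝ, x₀ ≤ T → IntervalIntegrable W volume x₀ T := by
        intro T hT
        rw [intervalIntegrable_iff_integrableOn_Ioc_of_le hT]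
        exact hW_IocX T
      have hII0 : ∀ T : ℝ, 0 ≤ T → IntervalIntegrable W volume 0 T := by
        intro T hT
        rw [intervalIntegrable_iff_integrableOn_Ioc_of_le hT]
        exact hW_Ioc T
      refine Tendsto.congr' ?_ (hI.sub_const (∫ x in (0:ℝ)..x₀, W x))
      filter_upwards [eventually_ge_atTop x₀] with T hT
      have h1 : ∫ x in x₀..T, W x = (∫ x in (0:ℝ)..T, W x) - ∫ x in (0:ℝ)..x₀, W x :=
        (intervalIntegral.integral_interval_sub_left (hII0 T (hx₀.le.trans hT))
          (hII0 x₀ hx₀.le)).symm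
      have h2 : ∫ x in x₀..(id T), ‖W x‖ = ∫ x in x₀..T, W x := by
        simp only [id]
        rw [intervalIntegral.integral_of_le hT, intervalIntegral.integral_of_le hT]
        refine setIntegral_congr_fun measurableSet_Ioc (fun x hx => ?_)
        have hfx : 0 ≤ f x := hpos x hx.1
        rw [Real.norm_of_nonneg]
        exact mul_nonneg hfx (Real.exp_nonneg _)
      rw [← h1, ← h2]
      rfl
    -- absolute integrability on (0,∞) at every t > σc
    have habs : ∀ t : ℝ, σc < t →
        IntegrableOn (fun x => |f x| * Real.exp (-t * x)) (Ioi 0) := by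
      intro t ht
      rw [← Set.Ioc_union_Ioi_eq_Ioi hx₀.le]
      refine IntegrableOn.union ?_ ?_
      · exact landau_int_mul_exp hmeas.abs t (hP x₀).abs
      · set σ' : ℝ := (σc + t) / 2 with hσ'
        have hσ'1 : σc < σ' := by rw [hσ']; linarith
        have hσ'2 : σ' < t := by rw [hσ']; linarith
        refine Integrable.mono' (htail σ' hσ'1) ?_ ?_
        · exact (hmeas.abs.mul
            (Real.measurable_exp.comp (measurable_id.const_mul (-t)))).aestronglyMeasurable
        · refine (ae_restrict_mem measurableSet_Ioi).mono (fun x hx => ?_)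
          have hx' : x₀ < x := mem_Ioi.mp hx
          have hfx : 0 ≤ f x := hpos x hx'
          rw [Real.norm_eq_abs, abs_mul, abs_abs, Real.abs_exp, abs_of_nonneg hfx]
          apply mul_le_mul_of_nonneg_left _ hfx
          apply Real.exp_le_exp.2
          have hx0 : (0:ℝ) < x := hx₀.trans hx'
          nlinarith
    -- complex Laplace transform integrability and limits
    have hFint : ∀ s : ℂ, σc < s.re →
        IntegrableOn (fun x : ℝ => (f x : ℂ) * Complex.exp (-s * x)) (Ioi 0) := by
      intro s hs
      refine Integrable.mono' (habs s.re hs) ?_ ?_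
      · exact ((Complex.measurable_ofReal.comp hmeas).mul
          (Complex.measurable_exp.comp (measurable_const.mul
            (Complex.measurable_ofReal.comp measurable_id)))).aestronglyMeasurable
      · refine Filter.Eventually.of_forall (fun x => ?_)
        rw [norm_mul, landau_norm_exp, Complex.norm_real, Real.norm_eq_abs]
    have hFtendsto : ∀ s : ℂ, σc < s.re →
        Tendsto (fun T : ℝ => ∫ x in (0:ℝ)..T, (f x : ℂ) * Complex.exp (-s * x)) atTop
          (𝓝 (landauF f s)) := fun s hs =>
      intervalIntegral_tendsto_integral_Ioi 0 (hFint s hs) tendsto_id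
    have hgF : ∀ s ∈ U, σc < s.re → g s = landauF f s := fun s hsU hs =>
      tendsto_nhds_unique (hglim s hsU hs) (hFtendsto s hs)
    -- choose ε
    obtain ⟨δ, hδpos, hball⟩ := Metric.isOpen_iff.mp hUopen _ hUmem
    set ε : ℝ := δ / 3 with hε
    have hεpos : 0 < ε := by rw [hε]; linarith
    have hball2 : Metric.ball ((σc:ℂ)) (2*ε) ⊆ U :=
      (Metric.ball_subset_ball (by rw [hε]; linarith)).trans hball
    set a : ℂ := ((σc + ε : ℝ) : ℂ) with ha
    have ha_re : a.re = σc + ε := by rw [ha]; exact Complex.ofReal_re _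
    have ha_gt : σc < a.re := by rw [ha_re]; linarith
    -- glued function
    set h : ℂ → ℂ := fun z => if σc < z.re then landauF f z else g z with hh
    have hH : IsOpen {z : ℂ | σc < z.re} := isOpen_lt continuous_const Complex.continuous_re
    have hhF : Set.EqOn h (landauF f) {z : ℂ | σc < z.re} := fun z hz => if_pos hz
    have hhg : Set.EqOn h g U := by
      intro w hw
      by_cases hwre : σc < w.re
      · rw [hh]; simp only [if_pos hwre]; exact (hgF w hw hwre).symm
      · rw [hh]; simp only [if_neg hwre]
    -- differentiability of h on a closed ball around a of radius 4ε/3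
    set R : ℝ := 4 * ε / 3 with hR
    have hdiffh : DifferentiableOn ℂ h (Metric.closedBall a R) := by
      intro z hz
      apply DifferentiableAt.differentiableWithinAt
      by_cases hzre : σc < z.re
      · have hmem : {z : ℂ | σc < z.re} ∈ 𝓝 z := hH.mem_nhds hzre
        have heq : h =ᶠ[𝓝 z] landauF f := eventually_of_mem hmem (fun w hw => hhF hw)
        rw [heq.differentiableAt_iff]
        exact ((landau_hasFPowerSeries hmeas habs hzre).analyticAt).differentiableAt
      · have hzU : z ∈ U := by
          apply hball2
          rw [Metric.mem_ball, dist_eq_norm]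
          have hzre' : z.re ≤ σc := not_lt.mp hzre
          have hza : ‖z - a‖ ≤ R := by
            rw [← dist_eq_norm]; exact Metric.mem_closedBall.mp hz
          have hsq1 : ‖z - a‖^2 = (z.re - (σc + ε))^2 + z.im^2 := by
            rw [Complex.sq_norm, Complex.normSq_apply]
            simp only [Complex.sub_re, Complex.sub_im, ha_re, ha, Complex.ofReal_re, Complex.ofReal_im]
            ring
          have hsq2 : ‖z - (σc:ℂ)‖^2 = (z.re - σc)^2 + z.im^2 := by
            rw [Complex.sq_norm, Complex.normSq_apply]
            simp only [Complex.sub_re, Complex.sub_im, Complex.ofReal_re, Complex.ofReal_im]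
            ring
          have hle : ‖z - a‖^2 ≤ R^2 := by
            apply pow_le_pow_left₀ (norm_nonneg _) hza
          have hp : (z.re - σc) * ε ≤ 0 :=
            mul_nonpos_of_nonpos_of_nonneg (by linarith) hεpos.le
          have hfinal : ‖z - (σc:ℂ)‖^2 < (2*ε)^2 := by
            rw [hsq2]
            rw [hsq1, hR] at hle
            nlinarith [sq_nonneg z.im, sq_nonneg (z.re - σc)]
          exact lt_of_pow_lt_pow_left₀ 2 (by positivity) hfinal
        have hmem : U ∈ 𝓝 z := hUopen.mem_nhds hzU
        have heq : h =ᶠ[𝓝 z] g := eventually_of_mem hmem (fun w hw => hhg hw)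
        rw [heq.differentiableAt_iff]
        exact (hganal z hzU).differentiableAt
    -- power series of h on the closed ball of radius R
    have hRpos : (0:ℝ) < R := by rw [hR]; linarith
    have hRnn : (0:ℝ≥0) < R.toNNReal := Real.toNNReal_pos.mpr hRpos
    have hdiffh' : DifferentiableOn ℂ h (Metric.closedBall a ((R.toNNReal : ℝ≥0) : ℝ)) := by
      rwa [Real.coe_toNNReal _ hRpos.le]
    have hcauchy : HasFPowerSeriesOnBall h (cauchyPowerSeries h a R.toNNReal) a R.toNNReal :=
      hdiffh'.hasFPowerSeriesOnBall hRnn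
    have hFa : HasFPowerSeriesOnBall (landauF f) (landauP f a) a
        (ENNReal.ofReal ((a.re - σc)/2)) := landau_hasFPowerSeries hmeas habs ha_gt
    have hha : HasFPowerSeriesAt h (landauP f a) a := by
      refine (hFa.hasFPowerSeriesAt).congr ?_
      exact eventually_of_mem (hH.mem_nhds ha_gt) (fun w hw => (hhF hw).symm)
    have heqq : cauchyPowerSeries h a R.toNNReal = landauP f a :=
      hcauchy.hasFPowerSeriesAt.eq_formalMultilinearSeries hha
    rw [heqq] at hcauchy
    -- evaluate the series at y = -(5ε/4)
    set y : ℂ := ((-(5*ε/4) : ℝ) : ℂ) with hy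
    have hymem : y ∈ Metric.eball (0:ℂ) ((R.toNNReal : ℝ≥0) : ℝ≥0∞) := by
      rw [Metric.mem_eball, edist_zero_right, ← ofReal_norm]
      have h1 : ‖y‖ = 5*ε/4 := by
        rw [hy, Complex.norm_real, Real.norm_eq_abs, abs_of_nonpos (by linarith)]; ring
      have h2 : (((R.toNNReal : ℝ≥0)) : ℝ≥0∞) = ENNReal.ofReal R := rfl
      rw [h1, h2]
      apply (ENNReal.ofReal_lt_ofReal_iff hRpos).mpr
      rw [hR]; linarith
    have hsum := (hcauchy.hasSum hymem).summable
    -- translate the terms into real numbers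
    set r : ℝ := 5*ε/4 with hrdef
    have hrpos : 0 ≤ r := by rw [hrdef]; linarith
    set d : ℕ → ℝ := fun n => ∫ x in Ioi (0:ℝ), f x * Real.exp (-(σc+ε) * x) * x ^ n with hd
    have hterm : ∀ n : ℕ, (landauP f a n fun _ => y)
        = ((d n * (r ^ n / n.factorial) : ℝ) : ℂ) := by
      intro n
      simp only [landauP, ContinuousMultilinearMap.mkPiRing_apply, Finset.prod_const,
        Finset.card_univ, Fintype.card_fin, smul_eq_mul]
      have hptw : (fun x : ℝ => (f x : ℂ) * Complex.exp (-a * x)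
            * (((-1:ℂ)^n / n.factorial) * x ^ n))
          = fun x : ℝ => ((-1:ℂ)^n / n.factorial)
            * ((f x * Real.exp (-(σc+ε) * x) * x ^ n : ℝ) : ℂ) := by
        funext x
        have hexp : Complex.exp (-a * x) = ((Real.exp (-(σc+ε) * x) : ℝ) : ℂ) := by
          rw [Complex.ofReal_exp]
          congr 1
          rw [ha]
          push_cast
          ring
        rw [hexp]
        push_cast
        ring
      rw [hptw, integral_const_mul]
      have hIor : (∫ x in Ioi (0:ℝ), ((f x * Real.exp (-(σc+ε) * x) * x ^ n : ℝ) : ℂ))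
          = ((d n : ℝ) : ℂ) := by
        simp only [hd]
        exact integral_ofReal
      rw [hIor, hy]
      push_cast
      ring_nf
      rw [mul_comm n 2, pow_mul]
      norm_num
    have hsumreal : Summable (fun n : ℕ => d n * (r ^ n / n.factorial)) := by
      have h2 := hsum
      rw [funext hterm] at h2
      exact Complex.summable_ofReal.mp h2
    -- split d into (0,x₀] and (x₀,∞) parts
    have haε : σc < σc + ε := by linarith
    have hdint : ∀ n : ℕ,
        IntegrableOn (fun x => f x * Real.exp (-(σc+ε) * x) * x ^ n) (Ioi 0) := by
      intro n
      refine Integrable.mono' (landau_habs_pow hmeas habs haε n) ?_ ?_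
      · exact ((hmeas.mul (Real.measurable_exp.comp (measurable_id.const_mul _))).mul
          (measurable_id.pow_const n)).aestronglyMeasurable
      · refine (ae_restrict_mem measurableSet_Ioi).mono (fun x hx => ?_)
        have hx0 : (0:ℝ) ≤ x := le_of_lt (mem_Ioi.mp hx)
        rw [Real.norm_eq_abs, abs_mul, abs_mul, Real.abs_exp, abs_of_nonneg (pow_nonneg hx0 n)]
        apply le_of_eq; ring
    set dIoc : ℕ → ℝ := fun n => ∫ x in Ioc 0 x₀, f x * Real.exp (-(σc+ε) * x) * x ^ n with hdIocDef
    set dIoi : ℕ → ℝ := fun n => ∫ x in Ioi x₀, f x * Real.exp (-(σc+ε) * x) * x ^ n with hdIoiDef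
    have hsplit : ∀ n : ℕ, d n = dIoc n + dIoi n := by
      intro n
      simp only [hd, hdIocDef, hdIoiDef]
      rw [← Set.Ioc_union_Ioi_eq_Ioi hx₀.le]
      exact setIntegral_union (Set.Ioc_disjoint_Ioi le_rfl) measurableSet_Ioi
        ((hdint n).mono_set Set.Ioc_subset_Ioi_self)
        ((hdint n).mono_set (Set.Ioi_subset_Ioi hx₀.le))
    have hsumIoc : Summable (fun n : ℕ => dIoc n * (r ^ n / n.factorial)) := by
      set K : ℝ := ∫ x in Ioc (0:ℝ) x₀, |f x| * Real.exp (-(σc+ε) * x) with hKdef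
      have habs_int : IntegrableOn (fun x => |f x| * Real.exp (-(σc+ε) * x)) (Ioc 0 x₀) :=
        (habs _ haε).mono_set Set.Ioc_subset_Ioi_self
      have hKnn : 0 ≤ K := by
        simp only [hKdef]
        refine integral_nonneg_of_ae ((ae_restrict_mem measurableSet_Ioc).mono (fun x hx => ?_))
        positivity
      refine Summable.of_norm_bounded (g := fun n => K * ((r * x₀) ^ n / n.factorial))
        (((Real.summable_pow_div_factorial (r * x₀))).mul_left K) (fun n => ?_)
      have hbound : |dIoc n| ≤ K * x₀ ^ n := by
        simp only [hdIocDef]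
        rw [← Real.norm_eq_abs]
        refine (norm_integral_le_integral_norm _).trans ?_
        have h2 : (∫ x in Ioc (0:ℝ) x₀, ‖f x * Real.exp (-(σc+ε) * x) * x ^ n‖)
            ≤ ∫ x in Ioc (0:ℝ) x₀, |f x| * Real.exp (-(σc+ε) * x) * x₀ ^ n := by
          refine setIntegral_mono_on (((hdint n).mono_set Set.Ioc_subset_Ioi_self).norm)
            (habs_int.mul_const _) measurableSet_Ioc (fun x hx => ?_)
          rw [Real.norm_eq_abs, abs_mul, abs_mul, Real.abs_exp,
            abs_of_nonneg (pow_nonneg hx.1.le n)]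
          refine mul_le_mul_of_nonneg_left ?_ (by positivity)
          exact pow_le_pow_left₀ hx.1.le hx.2 n
        rw [integral_mul_const] at h2
        simpa only [hKdef] using h2
      have hfact : (0:ℝ) ≤ r ^ n / n.factorial := by positivity
      rw [Real.norm_eq_abs, abs_mul, abs_of_nonneg hfact]
      calc |dIoc n| * (r ^ n / n.factorial) ≤ (K * x₀ ^ n) * (r ^ n / n.factorial) :=
            mul_le_mul_of_nonneg_right hbound hfact
      _ = K * ((r * x₀) ^ n / n.factorial) := by rw [mul_pow]; ring
    have hsumIoi : Summable (fun n : ℕ => dIoi n * (r ^ n / n.factorial)) := by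
      refine (hsumreal.sub hsumIoc).congr (fun n => ?_)
      rw [hsplit n]; ring
    have hIoinn : ∀ n : ℕ, 0 ≤ dIoi n * (r ^ n / n.factorial) := by
      intro n
      refine mul_nonneg ?_ (by positivity)
      simp only [hdIoiDef]
      refine integral_nonneg_of_ae ((ae_restrict_mem measurableSet_Ioi).mono (fun x hx => ?_))
      have hfx : 0 ≤ f x := hpos x (mem_Ioi.mp hx)
      have hx0 : (0:ℝ) ≤ x := ((hx₀.trans (mem_Ioi.mp hx))).le
      positivity
    -- reverse Tonelli: conclude integrability at σ = σc - ε/4 < σc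
    set σ : ℝ := σc - ε/4 with hσdef
    have hσlt : σ < σc := by rw [hσdef]; linarith
    have hIoiInt : IntegrableOn (fun x => f x * Real.exp (-σ * x)) (Ioi x₀) := by
      constructor
      · exact (hmeas.mul
          (Real.measurable_exp.comp (measurable_id.const_mul (-σ)))).aestronglyMeasurable
      · rw [hasFiniteIntegral_iff_ofReal
          ((ae_restrict_mem measurableSet_Ioi).mono (fun x hx =>
            mul_nonneg (hpos x (mem_Ioi.mp hx)) (Real.exp_nonneg _)))]
        have hpt : (∫⁻ x in Ioi x₀, ENNReal.ofReal (f x * Real.exp (-σ * x)))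
            = ∫⁻ x in Ioi x₀, ∑' n : ℕ,
              ENNReal.ofReal (f x * Real.exp (-(σc+ε) * x) * x ^ n * (r ^ n / n.factorial)) := by
          refine setLIntegral_congr_fun measurableSet_Ioi ?_
          intro x hx; beta_reduce
          have hx' : x₀ < x := mem_Ioi.mp hx
          have hx0 : (0:ℝ) ≤ x := (hx₀.trans hx').le
          have hfx : 0 ≤ f x := hpos x hx'
          have hfn : (fun n : ℕ => f x * Real.exp (-(σc+ε) * x) * x ^ n * (r ^ n / n.factorial))
              = fun n : ℕ => f x * Real.exp (-(σc+ε) * x) * ((r*x) ^ n / n.factorial) := by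
            funext n; rw [mul_pow]; ring
          rw [← ENNReal.ofReal_tsum_of_nonneg]
          · congr 1
            rw [hfn, tsum_mul_left]
            have hexp : (∑' n : ℕ, (r * x) ^ n / n.factorial) = Real.exp (r * x) := by
              rw [Real.exp_eq_exp_ℝ, NormedSpace.exp_eq_tsum_div]
            rw [hexp, mul_assoc, ← Real.exp_add]
            congr 2
            rw [hσdef, hrdef]; ring
          · intro n
            have : (0:ℝ) ≤ r ^ n / n.factorial := by positivity
            positivity
          · rw [hfn]
            exact (Real.summable_pow_div_factorial (r * x)).mul_left _
        have hmeas3 : ∀ n : ℕ, AEMeasurable (fun x : ℝ =>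
            ENNReal.ofReal (f x * Real.exp (-(σc+ε) * x) * x ^ n * (r ^ n / n.factorial)))
            (volume.restrict (Ioi x₀)) := by
          intro n
          apply Measurable.aemeasurable
          apply ENNReal.measurable_ofReal.comp
          exact ((hmeas.mul (Real.measurable_exp.comp (measurable_id.const_mul _))).mul
            (measurable_id.pow_const n)).mul_const _
        rw [hpt, lintegral_tsum hmeas3]
        have hterm2 : ∀ n : ℕ, (∫⁻ x in Ioi x₀,
            ENNReal.ofReal (f x * Real.exp (-(σc+ε) * x) * x ^ n * (r ^ n / n.factorial)))
            = ENNReal.ofReal (dIoi n * (r ^ n / n.factorial)) := by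
          intro n
          rw [eq_comm]
          simp only [hdIoiDef]
          rw [← integral_mul_const]
          refine ofReal_integral_eq_lintegral_ofReal
            (((hdint n).mono_set (Set.Ioi_subset_Ioi hx₀.le)).mul_const _) ?_
          refine (ae_restrict_mem measurableSet_Ioi).mono (fun x hx => ?_)
          have hfx : 0 ≤ f x := hpos x (mem_Ioi.mp hx)
          have hx0 : (0:ℝ) ≤ x := ((hx₀.trans (mem_Ioi.mp hx))).le
          have : (0:ℝ) ≤ r ^ n / n.factorial := by positivity
          positivity
        rw [tsum_congr hterm2, ← ENNReal.ofReal_tsum_of_nonneg hIoinn hsumIoi]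
        exact ENNReal.ofReal_lt_top
    have hFullInt : IntegrableOn (fun x => f x * Real.exp (-σ * x)) (Ioi 0) := by
      rw [← Set.Ioc_union_Ioi_eq_Ioi hx₀.le]
      exact (landau_int_mul_exp hmeas σ (hP x₀)).union hIoiInt
    exact hdiv σ hσlt ⟨_, intervalIntegral_tendsto_integral_Ioi 0 hFullInt tendsto_id⟩




theorem stmt_10 (f : ℝ → ℝ) (hmeas : Measurable f)
    (hloc : MeasureTheory.LocallyIntegrableOn f (Set.Ioi 0))
    (hsign : ∃ x₀ : ℝ, 0 < x₀ ∧
      ((∀ x : ℝ, x₀ < x → 0 ≤ f x) ∨ (∀ x : ℝ, x₀ < x → f x ≤ 0)))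
    (σc : ℝ)
    (hconv : ∀ σ : ℝ, σc < σ → ∃ I : ℝ,
      Filter.Tendsto (fun T : ℝ => ∫ x in (0:ℝ)..T, f x * Real.exp (-σ * x))
        Filter.atTop (nhds I))
    (hdiv : ∀ σ : ℝ, σ < σc → ¬ ∃ I : ℝ,
      Filter.Tendsto (fun T : ℝ => ∫ x in (0:ℝ)..T, f x * Real.exp (-σ * x))
        Filter.atTop (nhds I)) :
    ¬ ∃ (g : ℂ → ℂ) (U : Set ℂ), IsOpen U ∧ (σc : ℂ) ∈ U ∧
      (∀ z ∈ U, AnalyticAt ℂ g z) ∧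
      ∀ s : ℂ, s ∈ U → σc < s.re →
        Filter.Tendsto (fun T : ℝ => ∫ x in (0:ℝ)..T, (f x : ℂ) * Complex.exp (-s * x))
          Filter.atTop (nhds (g s)) := by
  obtain ⟨x₀, hx₀, hsgn⟩ := hsign
  rcases hsgn with hpos | hneg
  · exact landau_main f hmeas x₀ hx₀ hpos σc hconv hdiv
  · rintro ⟨g, U, hUopen, hUmem, hganal, hglim⟩
    refine landau_main (fun x => -f x) hmeas.neg x₀ hx₀
      (fun x hx => by simpa using hneg x hx) σc ?_ ?_
      ⟨fun z => -g z, U, hUopen, hUmem, fun z hz => (hganal z hz).neg, ?_⟩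
    · intro σ hσ
      obtain ⟨I, hI⟩ := hconv σ hσ
      refine ⟨-I, ?_⟩
      have : (fun T : ℝ => ∫ x in (0:ℝ)..T, (-f x) * Real.exp (-σ * x))
          = fun T : ℝ => -(∫ x in (0:ℝ)..T, f x * Real.exp (-σ * x)) := by
        funext T
        rw [← intervalIntegral.integral_neg]
        congr 1
        funext x
        ring
      rw [this]
      exact hI.neg
    · intro σ hσ ⟨I, hI⟩
      refine hdiv σ hσ ⟨-I, ?_⟩
      have : (fun T : ℝ => ∫ x in (0:ℝ)..T, f x * Real.exp (-σ * x))
          = fun T : ℝ => -(∫ x in (0:ℝ)..T, (-f x) * Real.exp (-σ * x)) := by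
        funext T
        rw [← intervalIntegral.integral_neg]
        congr 1
        funext x
        ring
      rw [this]
      exact hI.neg
    · intro s hsU hsre
      have h2 := (hglim s hsU hsre).neg
      have : (fun T : ℝ => ∫ x in (0:ℝ)..T, ((-f x : ℝ) : ℂ) * Complex.exp (-s * x))
          = fun T : ℝ => -(∫ x in (0:ℝ)..T, (f x : ℂ) * Complex.exp (-s * x)) := by
        funext T
        rw [← intervalIntegral.integral_neg]
        congr 1
        funext x
        push_cast
        ring
      rw [this]
      exact h2
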